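/- For every finite alphabet A with |A| ≥ 2, every positive integer m, and every valid index code of length ℓ with locality 1 for the three-receiver unicast problem B* (i.e., B*_S with S = {1,…,12}), one has ℓ ≥ 7m. -/

import Mathlib

/-- The want sets `W₁, W₂, W₃` of the three receivers. -/
def Wset : Fin 3 → Finset ℕ
  | 0 => {1, 2, 3, 4}
  | 1 => {5, 6, 7, 8}
  | 2 => {9, 10, 11, 12}

/-- The side information sets `K₁, K₂, K₃` of the three receivers. -/
def Kset : Fin 3 → Finset ℕ
  | 0 => {5, 6, 9, 10}
  | 1 => {1, 2, 9, 11}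
  | 2 => {1, 3, 5, 7}

/-- Directed edge relation of the side information graph `G*` on `{1, …, 12}`:
`(a, b)` is an edge iff `a ∈ Wᵢ` and `b ∈ Kᵢ` for the (unique) `i` with `a ∈ Wᵢ`. -/
def Gedge (a b : ℕ) : Prop := ∃ i : Fin 3, a ∈ Wset i ∧ b ∈ Kset i

/-- The underlying undirected side information graph `G*ᵤ`: distinct `a, b` are adjacent iff
both `(a, b)` and `(b, a)` are directed edges of `G*`. -/
def Gu : SimpleGraph ℕ where
  Adj a b := a ≠ b ∧ Gedge a b ∧ Gedge b a
  symm := by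
    refine ⟨fun a b h => ?_⟩
    exact ⟨h.1.symm, h.2.2, h.2.1⟩
  loopless := by
    refine ⟨fun a => ?_⟩
    intro h
    exact h.1 rfl

/-- A directed cycle (of length `k + 2 ≥ 2`) with all its vertices in the finite set `S`,
in the directed graph with edge relation `E`: a sequence of distinct vertices
`v 0, v 1, …` with a directed edge from each vertex to the (cyclically) next one. -/
def HasDirCycleIn (E : ℕ → ℕ → Prop) (S : Finset ℕ) : Prop :=
  ∃ k : ℕ, ∃ v : Fin (k + 2) → ℕ,
    Function.Injective v ∧ (∀ i, v i ∈ S) ∧ ∀ i, E (v i) (v (i + 1))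

/-- `MAIS` of the subgraph induced by `S` of the directed graph with edge relation `E`:
the maximum cardinality of a subset `T ⊆ S` whose induced subgraph contains no directed
cycle. -/
noncomputable def maisOn (E : ℕ → ℕ → Prop) (S : Finset ℕ) : ℕ :=
  sSup {n : ℕ | ∃ T : Finset ℕ, T ⊆ S ∧ T.card = n ∧ ¬ HasDirCycleIn E T}

/-- The independence number of the subgraph of `G` induced by the finite vertex set `S`:
the maximum cardinality of a set `T ⊆ S` of pairwise non-adjacent vertices. -/
noncomputable def alphaOn (G : SimpleGraph ℕ) (S : Finset ℕ) : ℕ :=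
  sSup {n : ℕ | ∃ T : Finset ℕ, T ⊆ S ∧ T.card = n ∧ ∀ a ∈ T, ∀ b ∈ T, ¬ G.Adj a b}

/-- A valid index code of length `ℓ` with locality `1` and message length `m`, over the
alphabet `A`, for the three-receiver unicast problem `B*_S` determined by the message subset
`S ⊆ {1, …, 12}`.  The messages are `x j ∈ A ^ m` for `j ∈ S`.  It consists of an encoder
`enc`, and for each receiver `i ∈ {1, 2, 3}` a set `R i` of at most `m * |Wᵢ ∩ S|` codeword
coordinates together with a decoder `dec i` which recovers the demanded messages
`(x j : j ∈ Wᵢ ∩ S)` from the observed codeword symbols `(enc x k : k ∈ R i)` and the side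
information `(x j : j ∈ Kᵢ ∩ S)`. -/
structure ValidIndexCode (A : Type*) [Fintype A] (m ℓ : ℕ) (S : Finset ℕ) where
  enc : ({j : ℕ // j ∈ S} → Fin m → A) → Fin ℓ → A
  R : Fin 3 → Finset (Fin ℓ)
  locality : ∀ i : Fin 3, (R i).card ≤ m * (Wset i ∩ S).card
  dec : ∀ i : Fin 3, ({k : Fin ℓ // k ∈ R i} → A) →
    ({j : ℕ // j ∈ Kset i ∩ S} → Fin m → A) → ({j : ℕ // j ∈ Wset i ∩ S} → Fin m → A)
  correct : ∀ (x : {j : ℕ // j ∈ S} → Fin m → A) (i : Fin 3)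
      (j : {j : ℕ // j ∈ Wset i ∩ S}),
    dec i (fun k => enc x k.1) (fun j' => x ⟨j'.1, (Finset.mem_inter.mp j'.2).2⟩) j =
      x ⟨j.1, (Finset.mem_inter.mp j.2).2⟩

/-- Extension of a partial message assignment on `T` to all of `{1, …, 12}`, filling the
remaining messages with the constant `a₀`. -/
def extMsg (A : Type*) (a₀ : A) (m : ℕ) (T : Finset ℕ)
    (y : {j : ℕ // j ∈ T} → Fin m → A) : {j : ℕ // j ∈ Finset.Icc 1 12} → Fin m → A :=
  fun j => if h : j.1 ∈ T then y ⟨j.1, h⟩ else fun _ => a₀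

/-- Every valid index code of length `ℓ` with locality `1` for the three-receiver unicast
problem `B*` (i.e. `B*_S` with `S = {1, …, 12}`) over an alphabet of size at least `2`
satisfies `ℓ ≥ 7 m`. -/
theorem length_lower_bound_for_Bstar
    (A : Type*) [Fintype A] (hA : 2 ≤ Fintype.card A)
    (m : ℕ) (hm : 0 < m) (ℓ : ℕ) (code : ValidIndexCode A m ℓ (Finset.Icc 1 12)) :
    7 * m ≤ ℓ := by
  classical
  have hAne : Nonempty A := Fintype.card_pos_iff.mp (by omega)
  obtain ⟨a₀⟩ := hAne
  -- The acyclic set T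
  set T : Finset ℕ := {1, 2, 3, 4, 7, 8, 12} with hT
  have key : Function.Injective (fun y : ({j : ℕ // j ∈ T} → Fin m → A) =>
      code.enc (extMsg A a₀ m T y)) := by
    intro y y' henc
    simp only at henc
    -- agreement predicate
    set P : ℕ → Prop := fun n => ∀ hS : n ∈ Finset.Icc 1 12,
      extMsg A a₀ m T y ⟨n, hS⟩ = extMsg A a₀ m T y' ⟨n, hS⟩ with hP
    have hnotT : ∀ n, n ∉ T → P n := by
      intro n hn hS
      simp only [extMsg, dif_neg hn]
    have hstep : ∀ i : Fin 3, (∀ n ∈ Kset i ∩ Finset.Icc 1 12, P n) →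
        ∀ n ∈ Wset i ∩ Finset.Icc 1 12, P n := by
      intro i hK n hn h
      have hf : (fun k : {k : Fin ℓ // k ∈ code.R i} =>
            code.enc (extMsg A a₀ m T y) k.1)
          = (fun k => code.enc (extMsg A a₀ m T y') k.1) := by
        funext k; rw [henc]
      have hg : (fun j' : {j : ℕ // j ∈ Kset i ∩ Finset.Icc 1 12} =>
            extMsg A a₀ m T y ⟨j'.1, (Finset.mem_inter.mp j'.2).2⟩)
          = (fun j' => extMsg A a₀ m T y' ⟨j'.1, (Finset.mem_inter.mp j'.2).2⟩) := by
        funext j'; exact hK j'.1 j'.2 _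
      have c1 := code.correct (extMsg A a₀ m T y) i ⟨n, hn⟩
      have c2 := code.correct (extMsg A a₀ m T y') i ⟨n, hn⟩
      rw [hf, hg] at c1
      exact c1.symm.trans c2
    have hd0 : ∀ n ∈ Kset 0, n ∉ T := by decide
    have hd1 : ∀ n ∈ Kset 1, n ∈ Wset 0 ∨ n ∉ T := by decide
    have hd2 : ∀ n ∈ Kset 2, n ∈ Wset 0 ∨ n ∈ Wset 1 ∨ n ∉ T := by decide
    have P0 : ∀ n ∈ Wset 0 ∩ Finset.Icc 1 12, P n := by
      refine hstep 0 ?_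
      intro n hn
      exact hnotT n (hd0 n (Finset.mem_inter.mp hn).1)
    have P1 : ∀ n ∈ Wset 1 ∩ Finset.Icc 1 12, P n := by
      refine hstep 1 ?_
      intro n hn
      rcases hd1 n (Finset.mem_inter.mp hn).1 with h | h
      · exact P0 n (Finset.mem_inter.mpr ⟨h, (Finset.mem_inter.mp hn).2⟩)
      · exact hnotT n h
    have P2 : ∀ n ∈ Wset 2 ∩ Finset.Icc 1 12, P n := by
      refine hstep 2 ?_
      intro n hn
      rcases hd2 n (Finset.mem_inter.mp hn).1 with h | h | h
      · exact P0 n (Finset.mem_inter.mpr ⟨h, (Finset.mem_inter.mp hn).2⟩)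
      · exact P1 n (Finset.mem_inter.mpr ⟨h, (Finset.mem_inter.mp hn).2⟩)
      · exact hnotT n h
    have hcover : ∀ n ∈ T, n ∈ Finset.Icc 1 12 ∧
        (n ∈ Wset 0 ∨ n ∈ Wset 1 ∨ n ∈ Wset 2) := by decide
    funext t
    obtain ⟨hS, hw⟩ := hcover t.1 t.2
    have hPt : P t.1 := by
      rcases hw with h | h | h
      · exact P0 t.1 (Finset.mem_inter.mpr ⟨h, hS⟩)
      · exact P1 t.1 (Finset.mem_inter.mpr ⟨h, hS⟩)
      · exact P2 t.1 (Finset.mem_inter.mpr ⟨h, hS⟩)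
    have := hPt hS
    simp only [extMsg, dif_pos t.2] at this
    exact this
  have hcard := Fintype.card_le_of_injective _ key
  simp only [Fintype.card_fun, Fintype.card_fin, Fintype.card_coe] at hcard
  have hT7 : T.card = 7 := by decide
  rw [hT7, ← pow_mul] at hcard
  have : m * 7 ≤ ℓ := by
    have h1 : (1 : ℕ) < Fintype.card A := by omega
    exact (Nat.pow_le_pow_iff_right h1).mp hcard
  omega
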